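/- The 4×4 determinant det(r̃₅(V₂⁽⁰⁾), ∂_{σ₃}F(σ₃₀,σ₂₀;V₁⁽⁰⁾), ∂_{σ₂}F(σ₃₀,σ₂₀;V₁⁽⁰⁾), ∇_V F(σ₃₀,σ₂₀;V₁⁽⁰⁾)·r̃₁(V₁⁽⁰⁾)) equals κ₁(V₁⁽⁰⁾)κ₅(V₂⁽⁰⁾)(ρ₁⁽⁰⁾)²(u₁⁽⁰⁾)² e^{σ₂₀+σ₃₀}(λ₅(V₂⁽⁰⁾)e^{2σ₂₀+σ₃₀} + λ₅(V₁⁽⁰⁾)), and is strictly positive when κ₁(V₁⁽⁰⁾), κ₅(V₂⁽⁰⁾), λ₅(V₁⁽⁰⁾), λ₅(V₂⁽⁰⁾) > 0. -/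

import Mathlib

/-- Explicit evaluation and positivity of the 4×4 determinant
det(r̃₅(V₂⁽⁰⁾), ∂σ₃F, ∂σ₂F, ∇_V F · r̃₁(V₁⁽⁰⁾)) at the background states, using
u₂⁽⁰⁾ = u₁⁽⁰⁾e^{σ₂₀}, ρ₂⁽⁰⁾ = ρ₁⁽⁰⁾e^{σ₃₀} and λ₁(V₁⁽⁰⁾) = -λ₅(V₁⁽⁰⁾). -/
theorem stmt5 (κ1 κ5 ρ1 u1 c1 c2 σ20 σ30 lam51 lam52 : ℝ)
    (hρ1 : 0 < ρ1) (hu1 : 0 < u1) :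
    let ρ2 := ρ1 * Real.exp σ30
    let u2 := u1 * Real.exp σ20
    let M : Matrix (Fin 4) (Fin 4) ℝ := Matrix.of
      ![![-(κ5 * lam52), 0, u1 * Real.exp σ20, -(κ1 * lam51 * Real.exp σ20)],
        ![κ5, 0, 0, κ1 * Real.exp σ20],
        ![κ5 * lam52 * ρ2 * u2, 0, 0, -(κ1 * lam51 * ρ1 * u1)],
        ![κ5 * lam52 * ρ2 * u2 / c2 ^ 2, ρ1 * Real.exp σ30, 0,
          -(κ1 * lam51 * ρ1 * u1 * Real.exp σ30 / c1 ^ 2)]]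
    M.det = κ1 * κ5 * ρ1 ^ 2 * u1 ^ 2 * Real.exp (σ20 + σ30) *
        (lam52 * Real.exp (2 * σ20 + σ30) + lam51) ∧
      (0 < κ1 → 0 < κ5 → 0 < lam51 → 0 < lam52 → 0 < M.det) := by
  intro ρ2 u2 M
  have hdet : M.det = κ1 * κ5 * ρ1 ^ 2 * u1 ^ 2 * Real.exp (σ20 + σ30) *
      (lam52 * Real.exp (2 * σ20 + σ30) + lam51) := by
    show Matrix.det _ = _
    rw [Matrix.det_succ_row_zero]
    simp [M, ρ2, u2, Fin.sum_univ_succ, Fin.succAbove, Fin.castSucc, Fin.castAdd, Fin.castLE, Matrix.det_fin_three, Real.exp_add,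
      show (2:ℝ)*σ20 + σ30 = σ20 + σ20 + σ30 by ring]
    ring
  refine ⟨hdet, fun h1 h5 hl1 hl2 => ?_⟩
  rw [hdet]
  positivity
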